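/- Fix a natural number u and let S = { x ∈ ℚ : x > 0 and x = (u − 2) − ∑_{i=1}^u 1/kᵢ for some positive integers k₁,…,k_u }. Then S satisfies the descending chain condition: there is no strictly decreasing sequence x₀ > x₁ > x₂ > … of elements of S. -/

import Mathlib

/-- The set of positive rationals of the form `(u-2) - ∑_{i=1}^u 1/kᵢ`, for
positive integers `kᵢ`, satisfies the descending chain condition. -/
theorem dcc_for_chi_values (u : ℕ) :
    ¬ ∃ f : ℕ → ℚ,
      (∀ j, 0 < f j ∧ ∃ k : Fin u → ℕ+,
        f j = ((u : ℚ) - 2) - ∑ i, (1 : ℚ) / ((k i : ℕ) : ℚ)) ∧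
      (∀ j, f (j + 1) < f j) := by
  rintro ⟨f, hf, hdec⟩
  choose hpos k hk using hf
  have hpwo : Set.IsPWO (Set.univ : Set (Fin u → ℕ)) := Set.isPWO_of_wellQuasiOrderedLE Set.univ
  obtain ⟨m, n, hmn, hle⟩ :=
    Set.PartiallyWellOrderedOn.exists_lt hpwo (f := fun j i => ((k j i : ℕ))) (fun j => Set.mem_univ _)
  have hsum : ∑ i, (1 : ℚ) / ((k n i : ℕ) : ℚ) ≤ ∑ i, (1 : ℚ) / ((k m i : ℕ) : ℚ) := by
    apply Finset.sum_le_sum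
    intro i _
    apply one_div_le_one_div_of_le
    · exact_mod_cast (k m i).pos
    · exact_mod_cast hle i
  have h1 : f m ≤ f n := by rw [hk m, hk n]; linarith
  have h2 : f n < f m := strictAnti_nat_of_succ_lt hdec hmn
  linarith
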